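/- arXiv:1304.2295 — 5 statements merged into one kernel-verified Lean document; each statement's English description precedes it below -/
import Mathlib

section
/- Let T be a finite NW-deterministic Wang tile set admitting a valid Wang tiling t : ℤ² → T, and let 𝒜_T be its Mealy automaton. For n ∈ ℕ let w_n = (t(k+n, k))_{k∈ℕ} ∈ Σ^ω be the word read along the n-th diagonal. Then σ_⊥^m(w_n) = ⊥^m w_{m+n} for all n, m ∈ ℕ. -/
/-- A Mealy automaton with state set `A` and alphabet `X`:
a transition map `δ : A × X → A` and an output map `σ : A × X → X`. -/
structure Mealy (A X : Type*) where
  δ : A → X → A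
  σ : A → X → X

namespace Mealy

variable {A X : Type*} (M : Mealy A X)

/-- The state reached from state `a` after reading the finite word `u`. -/
def stA : A → List X → A
  | a, [] => a
  | a, x :: u => stA (M.δ a x) u

/-- The output word produced by the single state `a` on the finite input word `u`. -/
def outA : A → List X → List X
  | _, [] => []
  | a, x :: u => M.σ a x :: outA (M.δ a x) u

/-- The extended output map: the action `σ_as` of a state word `as` on a finite word. -/
def outW (as : List A) (u : List X) : List X :=
  as.foldl (fun w b => M.outA b w) u

/-- The extended transition map: `δ_u` applied to a state word. -/
def stW : List A → List X → List A
  | [], _ => []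
  | a :: as, u => M.stA a u :: stW as (M.outA a u)

/-- The action of a single state `a` on an infinite word. -/
def outInf (a : A) (w : ℕ → X) : ℕ → X :=
  fun n => M.σ (M.stA a (List.ofFn fun i : Fin n => w i)) (w n)

/-- The action `σ_as` of a state word on an infinite word. -/
def outWInf (as : List A) (w : ℕ → X) : ℕ → X :=
  as.foldl (fun v b => M.outInf b v) w

/-- The semigroup generated by the Mealy automaton, as the set of all
transformations of infinite words given by nonempty state words. -/
def genSet : Set ((ℕ → X) → (ℕ → X)) :=
  {f | ∃ as : List A, as ≠ [] ∧ f = M.outWInf as}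

end Mealy

/-- Concatenation of a finite word with an infinite word. -/
def listApp {X : Type*} (p : List X) (q : ℕ → X) : ℕ → X :=
  fun n => if h : n < p.length then p.get ⟨n, h⟩ else q (n - p.length)

/-- A tile set is NW-deterministic if each tile is determined by its
north and west colors. -/
def NWDet {T C : Type*} (N _S _E W : T → C) : Prop :=
  ∀ s t : T, N s = N t → W s = W t → s = t

open Classical in
/-- The Mealy automaton `𝒜_T` of a tile set: states and letters are tiles
together with a fresh symbol `⊥` (here `none`); the transition is the reset
`δ(x,y) = y`; the output `σ(s,t)` is the unique tile `r` with `r_N = t_S`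
and `r_W = s_E` if it exists, and `⊥` otherwise. -/
noncomputable def tileM {T C : Type*} (N S E W : T → C) :
    Mealy (Option T) (Option T) where
  δ := fun _ y => y
  σ := fun a x =>
    match a, x with
    | some s, some t =>
        if h : ∃ r : T, N r = S t ∧ W r = E s then some h.choose else none
    | _, _ => none

/-- A valid Wang tiling of the plane `ℤ²`. -/
def ValidZ2 {T C : Type*} (N S E W : T → C) (t : ℤ × ℤ → T) : Prop :=
  ∀ x y : ℤ, N (t (x, y)) = S (t (x, y + 1)) ∧ E (t (x, y)) = W (t (x + 1, y))

/-- A valid Wang tiling of the square `{0, 1, …, n}²`. -/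
def ValidSquare {T C : Type*} (N S E W : T → C) (n : ℕ) (t : ℕ → ℕ → T) : Prop :=
  (∀ x y : ℕ, x ≤ n → y < n → N (t x y) = S (t x (y + 1))) ∧
  (∀ x y : ℕ, x < n → y ≤ n → E (t x y) = W (t (x + 1) y))

private lemma tileM_stA {T C : Type*} (N S E W : T → C) :
    ∀ (u : List (Option T)) (a : Option T),
      (tileM N S E W).stA a u = u.getLastD a := by
  intro u
  induction u with
  | nil => intro a; rfl
  | cons x u ih =>
      intro a
      show (tileM N S E W).stA x u = _
      rw [ih, List.getLastD_cons]

private lemma tileM_sigma_some {T C : Type*} (N S E W : T → C)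
    (hNW : NWDet N S E W) (s u r : T) (h1 : N r = S u) (h2 : W r = E s) :
    (tileM N S E W).σ (some s) (some u) = some r := by
  have hex : ∃ r : T, N r = S u ∧ W r = E s := ⟨r, h1, h2⟩
  have hrfl : (tileM N S E W).σ (some s) (some u) =
      @dite _ (∃ r : T, N r = S u ∧ W r = E s) (Classical.propDecidable _)
        (fun h => some h.choose) (fun _ => none) := rfl
  rw [hrfl, dif_pos hex]
  exact congrArg some (hNW _ _ (hex.choose_spec.1.trans h1.symm)
    (hex.choose_spec.2.trans h2.symm))

private lemma getLastD_ofFn_succ {α : Type*} (k : ℕ) (f : Fin (k + 1) → α) (a : α) :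
    (List.ofFn f).getLastD a = f (Fin.last k) := by
  rw [List.ofFn_succ', List.concat_eq_append]
  generalize (List.ofFn fun i : Fin k => f i.castSucc) = l
  induction l generalizing a with
  | nil => rfl
  | cons y l ih => rw [List.cons_append, List.getLastD_cons]; exact ih y

private lemma tile_step {T C : Type*} (N S E W : T → C)
    (hNW : NWDet N S E W) (t : ℤ × ℤ → T) (ht : ValidZ2 N S E W t)
    (w : ℕ → ℕ → Option T) (hw : ∀ n k : ℕ, w n k = some (t ((k : ℤ) + n, (k : ℤ))))
    (j n : ℕ) :
    (tileM N S E W).outInf none (fun k => if k < j then none else w n (k - j)) =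
      fun k => if k < j + 1 then none else w (n + 1) (k - (j + 1)) := by
  set v : ℕ → Option T := fun k => if k < j then none else w n (k - j) with hv
  funext k
  show (tileM N S E W).σ
      ((tileM N S E W).stA none (List.ofFn fun i : Fin k => v i)) (v k) = _
  rw [tileM_stA]
  match k with
  | 0 =>
      simp only [List.ofFn_zero, List.getLastD_nil]
      rw [if_pos (Nat.succ_pos j)]
      rfl
  | (kk + 1) =>
      rw [getLastD_ofFn_succ]
      show (tileM N S E W).σ (v kk) (v (kk + 1)) = _
      by_cases hk : kk < j
      · have : v kk = none := if_pos hk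
        rw [this]
        have : (tileM N S E W).σ none (v (kk + 1)) = none := rfl
        rw [this, if_pos (show kk + 1 < j + 1 by omega)]
      · set d := kk - j with hd
        have hkk : kk = d + j := by omega
        have h1 : v kk = some (t ((d : ℤ) + n, (d : ℤ))) := by
          simp only [hv, if_neg hk, hw]
          rfl
        have h2 : v (kk + 1) = some (t ((d : ℤ) + 1 + n, (d : ℤ) + 1)) := by
          have : ¬ kk + 1 < j := by omega
          simp only [hv, if_neg this, hw]
          have : kk + 1 - j = d + 1 := by omega
          rw [this]
          congr 2 <;> push_cast <;> ring
        have h2' := (ht ((d : ℤ) + n) (d : ℤ)).2.symm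
        rw [show (d : ℤ) + n + 1 = (d : ℤ) + 1 + n from by ring] at h2' 
        rw [h1, h2,
          tileM_sigma_some N S E W hNW _ _ (t ((d : ℤ) + 1 + n, (d : ℤ)))
            (ht ((d : ℤ) + 1 + n) (d : ℤ)).1 h2',
          if_neg (show ¬ kk + 1 < j + 1 by omega)]
        have : kk + 1 - (j + 1) = d := by omega
        rw [this, hw]
        congr 2 <;> push_cast <;> ring

/-- let `t : ℤ² → T` be a valid Wang tiling by an NW-deterministic
tile set, and `w_n = (t(k+n, k))_k` the word along the `n`-th diagonal. Then
`σ_⊥^m(w_n) = ⊥^m w_{m+n}` for all `n, m ∈ ℕ`. -/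
theorem stmt_8 {T C : Type*} [Fintype T] (N S E W : T → C)
    (hNW : NWDet N S E W) (t : ℤ × ℤ → T) (ht : ValidZ2 N S E W t)
    (w : ℕ → ℕ → Option T) (hw : ∀ n k : ℕ, w n k = some (t ((k : ℤ) + n, (k : ℤ))))
    (n m : ℕ) :
    ((tileM N S E W).outInf none)^[m] (w n) =
      fun k => if k < m then none else w (m + n) (k - m) := by
  induction m with
  | zero =>
      funext k
      simp
  | succ m ih =>
      rw [Function.iterate_succ_apply', ih,
        tile_step N S E W hNW t ht w hw m (m + n)]
      funext k
      by_cases hk : k < m + 1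
      · simp [hk]
      · have hm : m + n + 1 = m + 1 + n := by ring
        simp [hk, hm]
end

section
/- Let T be a finite NW-deterministic Wang tile set admitting a valid Wang tiling of ℤ². Then the maps σ_⊥^m : Σ^ω → Σ^ω (m ≥ 1) are pairwise distinct; consequently, the semigroup generated by the Mealy automaton 𝒜_T is infinite. -/
section aux9
variable {T C : Type*} (N S E W : T → C)

lemma tile_stA9 (w : ℕ → Option T) :
    ∀ (n : ℕ) (a : Option T), (tileM N S E W).stA a (List.ofFn fun i : Fin n => w i) =
      if n = 0 then a else w (n-1) := by
  intro n
  induction n generalizing w with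
  | zero => intro a; simp [Mealy.stA]
  | succ k ih =>
      intro a
      rw [List.ofFn_succ, Mealy.stA]
      have h := ih (fun j => w (j+1)) ((tileM N S E W).δ a (w 0))
      simp only [Fin.val_succ, Fin.val_zero] at h ⊢
      rw [h]
      rcases k with _ | j
      · rfl
      · simp

lemma tile_sigma_none_left (x : Option T) : (tileM N S E W).σ none x = none := by
  cases x <;> rfl

open Classical in
lemma tile_sigma_some (s u : T) :
    (tileM N S E W).σ (some s) (some u)
      = if h : ∃ r : T, N r = S u ∧ W r = E s then some h.choose else none := rfl

lemma tile_outInf9 (w : ℕ → Option T) (n : ℕ) :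
    (tileM N S E W).outInf none w n
      = (tileM N S E W).σ (if n = 0 then none else w (n-1)) (w n) := by
  unfold Mealy.outInf
  rw [tile_stA9]

lemma outWInf_replicate9 {A X : Type*} (M : Mealy A X) (a : A) (k : ℕ) :
    M.outWInf (List.replicate k a) = (M.outInf a)^[k] := by
  funext w
  induction k generalizing w with
  | zero => rfl
  | succ j ih =>
      rw [List.replicate_succ, Function.iterate_succ_apply]
      exact ih (M.outInf a w)

end aux9

/-- if an NW-deterministic tile set admits a valid Wang tiling of
`ℤ²`, then the maps `σ_⊥^m` (`m ≥ 1`) are pairwise distinct, and consequently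
the semigroup generated by the Mealy automaton `𝒜_T` is infinite. -/
theorem stmt_9 {T C : Type*} [Fintype T] (N S E W : T → C)
    (hNW : NWDet N S E W) (t : ℤ × ℤ → T) (ht : ValidZ2 N S E W t) :
    (∀ m m' : ℕ, 1 ≤ m → 1 ≤ m' →
      ((tileM N S E W).outInf none)^[m] = ((tileM N S E W).outInf none)^[m'] →
        m = m') ∧
    (tileM N S E W).genSet.Infinite := by
  set M := tileM N S E W with hM
  set v : ℕ → ℕ → Option T := fun m n => if n < m then none else some (t (n, (n:ℤ) - m)) with hv
  have key : ∀ m : ℕ, (M.outInf none)^[m] (v 0) = v m := by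
    intro m
    induction m with
    | zero => rfl
    | succ k ih =>
        rw [Function.iterate_succ_apply', ih]
        funext n
        rw [hM, tile_outInf9]
        rcases Nat.eq_zero_or_pos n with hn | hn
        · subst hn
          rw [if_pos rfl, tile_sigma_none_left, hv]
          simp
        · rw [if_neg (Nat.pos_iff_ne_zero.mp hn)]
          by_cases hk : n < k + 1
          · have h1 : n - 1 < k := by omega
            have hnone : v k (n-1) = none := by rw [hv]; simp [h1]
            rw [hnone, tile_sigma_none_left, hv]
            simp [hk]
          · have h1 : ¬ (n - 1 < k) := by omega
            have h2 : ¬ (n < k) := by omega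
            have hcast : ((n-1 : ℕ) : ℤ) = (n:ℤ) - 1 := by omega
            have e1 : v k (n-1) = some (t ((n:ℤ)-1, (n:ℤ) - 1 - k)) := by
              rw [hv]; simp only [if_neg h1, hcast]
            have e2 : v k n = some (t ((n:ℤ), (n:ℤ) - k)) := by
              rw [hv]; simp [h2]
            rw [e1, e2, tile_sigma_some]
            have harg : ((n:ℤ) - 1 + 1, (n:ℤ) - 1 - k) = ((n:ℤ), (n:ℤ) - (k+1)) := by
              simp only [Prod.mk.injEq]; exact ⟨by ring, by ring⟩
            have harg2 : ((n:ℤ), (n:ℤ) - (k+1) + 1) = ((n:ℤ), (n:ℤ) - k) := by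
              simp only [Prod.mk.injEq]; exact ⟨trivial, by ring⟩
            have hN : N (t ((n:ℤ), (n:ℤ) - (k+1))) = S (t ((n:ℤ), (n:ℤ) - k)) := by
              have := (ht (n:ℤ) ((n:ℤ) - (k+1))).1
              rwa [harg2] at this
            have hW : W (t ((n:ℤ), (n:ℤ) - (k+1))) = E (t ((n:ℤ)-1, (n:ℤ) - 1 - k)) := by
              have := (ht ((n:ℤ)-1) ((n:ℤ) - 1 - k)).2
              rw [harg] at this
              exact this.symm
            have hex : ∃ r : T, N r = S (t ((n:ℤ), (n:ℤ) - k)) ∧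
                W r = E (t ((n:ℤ)-1, (n:ℤ) - 1 - k)) :=
              ⟨t ((n:ℤ), (n:ℤ) - (k+1)), hN, hW⟩
            rw [dif_pos hex]
            have hch := hex.choose_spec
            have heq : hex.choose = t ((n:ℤ), (n:ℤ) - (k+1)) := by
              apply hNW
              · rw [hch.1, hN]
              · rw [hch.2, hW]
            have hc : ((k+1 : ℕ) : ℤ) = (k:ℤ) + 1 := by push_cast; ring
            rw [heq, hv]
            simp only [if_neg hk, hc]
  have hdist : ∀ m m' : ℕ, (M.outInf none)^[m] = (M.outInf none)^[m'] → m = m' := by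
    intro m m' h
    by_contra hne
    wlog hlt : m < m' generalizing m m'
    · exact this m' m h.symm (Ne.symm hne) (by omega)
    have h1 := congrFun (congrFun h (v 0)) m
    rw [key m, key m'] at h1
    have e1 : v m m = some (t ((m:ℤ), 0)) := by rw [hv]; simp
    have e2 : v m' m = none := by rw [hv]; simp [hlt]
    rw [e1, e2] at h1
    exact Option.some_ne_none _ h1
  refine ⟨fun m m' _ _ h => hdist m m' h, ?_⟩
  refine Set.infinite_of_injective_forall_mem
    (f := fun m : ℕ => (M.outInf none)^[m+1]) ?_ ?_
  · intro a b hab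
    have := hdist (a+1) (b+1) hab
    omega
  · intro m
    exact ⟨List.replicate (m+1) none, by simp,
      (outWInf_replicate9 M none (m+1)).symm⟩
end

section
/- Let T be a finite NW-deterministic tile set such that ℤ² has no valid Wang tiling by T. Then the semigroup ⟨𝒜_T⟩ generated by the Mealy automaton 𝒜_T is finite; in fact, if n is such that {0,…,n}² has no valid tiling, then |⟨𝒜_T⟩| ≤ 1 + |A| + |A|² + ⋯ + |A|^{2n−1} + |Σ^n|^{|Σ^n|}. -/
section AuxGeneral

variable {A X : Type*}

lemma stA_append (M : Mealy A X) (a : A) (u v : List X) :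
    M.stA a (u ++ v) = M.stA (M.stA a u) v := by
  induction u generalizing a with
  | nil => rfl
  | cons x u ih => simpa [Mealy.stA] using ih (M.δ a x)

lemma outWInf_cons (M : Mealy A X) (a : A) (as : List A) (w : ℕ → X) :
    M.outWInf (a :: as) w = M.outWInf as (M.outInf a w) := rfl

lemma outWInf_concat (M : Mealy A X) (as : List A) (a : A) (w : ℕ → X) :
    M.outWInf (as ++ [a]) w = M.outInf a (M.outWInf as w) := by
  simp [Mealy.outWInf]

lemma outInf_zero (M : Mealy A X) (a : A) (w : ℕ → X) :
    M.outInf a w 0 = M.σ a (w 0) := by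
  simp [Mealy.outInf, Mealy.stA]

lemma outInf_congr (M : Mealy A X) (a : A) {w w' : ℕ → X} {p : ℕ}
    (h : ∀ i ≤ p, w i = w' i) : M.outInf a w p = M.outInf a w' p := by
  unfold Mealy.outInf
  rw [h p le_rfl, show (fun i : Fin p => w i) = fun i : Fin p => w' i from
    funext fun i => h i i.isLt.le]

lemma outWInf_congr (M : Mealy A X) (as : List A) {p : ℕ} :
    ∀ {w w' : ℕ → X}, (∀ i ≤ p, w i = w' i) →
      M.outWInf as w p = M.outWInf as w' p := by
  induction as with
  | nil => intro w w' h; exact h p le_rfl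
  | cons a as ih =>
    intro w w' h
    rw [outWInf_cons, outWInf_cons]
    exact ih fun i hi => outInf_congr M a fun j hj => h j (hj.trans hi)

end AuxGeneral

section AuxTile

variable {T C : Type*} (N S E W : T → C)

lemma tile_stA_concat (a : Option T) (u : List (Option T)) (x : Option T) :
    (tileM N S E W).stA a (u ++ [x]) = x := by
  rw [stA_append]; rfl

lemma tile_outInf_succ (a : Option T) (w : ℕ → Option T) (p : ℕ) :
    (tileM N S E W).outInf a w (p + 1) = (tileM N S E W).σ (w p) (w (p + 1)) := by
  unfold Mealy.outInf
  congr 1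
  rw [List.ofFn_succ', List.concat_eq_append, tile_stA_concat]
  simp

lemma tsigma_none_right (s : Option T) : (tileM N S E W).σ s none = none := by
  cases s <;> rfl

lemma tsigma_eq_some {s t : Option T} {u : T}
    (h : (tileM N S E W).σ s t = some u) :
    ∃ s' t', s = some s' ∧ t = some t' ∧ N u = S t' ∧ W u = E s' := by
  match s, t with
  | none, t => exact absurd h (by simp [tileM])
  | some s', none => exact absurd h (by simp [tileM])
  | some s', some t' =>
    refine ⟨s', t', rfl, rfl, ?_⟩
    simp only [tileM] at h
    split at h
    · next hex =>
      obtain rfl : hex.choose = u := by injection h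
      exact hex.choose_spec
    · simp at h

lemma rows_vert {L : ℕ} {r : ℕ → ℕ → Option T}
    (hstep : ∀ k q, k < L →
      r (k + 1) (q + 1) = (tileM N S E W).σ (r k q) (r k (q + 1)))
    (hstep0 : ∀ k, k < L → ∃ s, r (k + 1) 0 = (tileM N S E W).σ s (r k 0)) :
    ∀ k q, k < L → ∀ u, r (k + 1) q = some u →
      ∃ v, r k q = some v ∧ N u = S v := by
  intro k q hk u hu
  cases q with
  | zero =>
    obtain ⟨s, hs⟩ := hstep0 k hk
    rw [hu] at hs
    obtain ⟨s', t', _, h2, h3, _⟩ := tsigma_eq_some N S E W hs.symm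
    exact ⟨t', h2, h3⟩
  | succ q =>
    have h' := (hstep k q hk).symm.trans hu
    obtain ⟨s', t', _, h2, h3, _⟩ := tsigma_eq_some N S E W h'
    exact ⟨t', h2, h3⟩

lemma rows_horiz {L : ℕ} {r : ℕ → ℕ → Option T}
    (hstep : ∀ k q, k < L →
      r (k + 1) (q + 1) = (tileM N S E W).σ (r k q) (r k (q + 1)))
    (k q : ℕ) (hk : k < L) (u : T) (hu : r (k + 1) (q + 1) = some u) :
    ∃ v, r k q = some v ∧ W u = E v := by
  have h' := (hstep k q hk).symm.trans hu
  obtain ⟨s', t', h1, _, _, h4⟩ := tsigma_eq_some N S E W h'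
  exact ⟨s', h1, h4⟩

lemma rows_cone {L : ℕ} {r : ℕ → ℕ → Option T}
    (hstep : ∀ k q, k < L →
      r (k + 1) (q + 1) = (tileM N S E W).σ (r k q) (r k (q + 1)))
    (hstep0 : ∀ k, k < L → ∃ s, r (k + 1) 0 = (tileM N S E W).σ s (r k 0)) :
    ∀ j κ q μ, κ + j ≤ L → μ ≤ q → q ≤ μ + j → r (κ + j) q ≠ none →
      r κ μ ≠ none := by
  intro j
  induction j with
  | zero =>
    intro κ q μ _ h1 h2 h3
    obtain rfl : μ = q := le_antisymm h1 h2
    simpa using h3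
  | succ j ih =>
    intro κ q μ hL h1 h2 h3
    have hk : κ + j < L := by omega
    have h3' : r ((κ + j) + 1) q ≠ none := by
      rwa [show κ + (j + 1) = (κ + j) + 1 by omega] at h3
    obtain ⟨u, hu⟩ := Option.ne_none_iff_exists'.mp h3'
    cases q with
    | zero =>
      obtain ⟨v, hv, _⟩ := rows_vert N S E W hstep hstep0 (κ + j) 0 hk u hu
      exact ih κ 0 μ (by omega) (by omega) (by omega) (by simp [hv])
    | succ q =>
      by_cases hc : q + 1 ≤ μ + j
      · obtain ⟨v, hv, _⟩ := rows_vert N S E W hstep hstep0 (κ + j) (q + 1) hk u hu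
        exact ih κ (q + 1) μ (by omega) h1 hc (by simp [hv])
      · obtain ⟨v, hv, _⟩ := rows_horiz N S E W hstep (κ + j) q hk u hu
        exact ih κ q μ (by omega) (by omega) (by omega) (by simp [hv])

end AuxTile

section MainLemma

variable {T C : Type*} (N S E W : T → C)

lemma out_eventually_none (n : ℕ)
    (h : ¬∃ t : ℕ → ℕ → T, ValidSquare N S E W n t)
    (as : List (Option T)) (hlen : 2 * n ≤ as.length)
    (w : ℕ → Option T) (p : ℕ) (hp : n ≤ p) :
    (tileM N S E W).outWInf as w p = none := by
  by_contra hne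
  set M := tileM N S E W with hM
  set L := as.length with hL
  set r : ℕ → ℕ → Option T := fun k => M.outWInf (as.take k) w with hr
  have hrL : r L p ≠ none := by
    rw [hr]
    simpa [hL, List.take_length] using hne
  have hstepfull : ∀ k, ∀ hk : k < L, r (k + 1) = M.outInf (as[k]'(by omega)) (r k) := by
    intro k hk
    show M.outWInf (as.take (k + 1)) w = _
    rw [List.take_succ, List.getElem?_eq_getElem hk, Option.toList_some,
      outWInf_concat]
  have hstep : ∀ k q, k < L → r (k + 1) (q + 1) = M.σ (r k q) (r k (q + 1)) := by
    intro k q hk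
    rw [hstepfull k hk, tile_outInf_succ]
  have hstep0 : ∀ k, k < L → ∃ s, r (k + 1) 0 = M.σ s (r k 0) :=
    fun k hk => ⟨as[k]'(by omega), by rw [hstepfull k hk, outInf_zero]⟩
  have hcone : ∀ κ μ, κ ≤ L → μ ≤ p → p ≤ μ + (L - κ) → r κ μ ≠ none := by
    intro κ μ h1 h2 h3
    have e : κ + (L - κ) = L := by omega
    exact rows_cone N S E W hstep hstep0 (L - κ) κ p μ (by omega) h2 h3
      (by rw [e]; exact hrL)
  obtain ⟨u0, hu0⟩ := Option.ne_none_iff_exists'.mp hrL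
  refine h ⟨fun x y => (r (L - n + x - y) (p - n + x)).getD u0, ?_, ?_⟩
  · intro x y hx hy
    have hk : L - n + x - (y + 1) < L := by omega
    have hne1 : r ((L - n + x - (y + 1)) + 1) (p - n + x) ≠ none := by
      rw [show (L - n + x - (y + 1)) + 1 = L - n + x - y by omega]
      exact hcone _ _ (by omega) (by omega) (by omega)
    obtain ⟨u, hu⟩ := Option.ne_none_iff_exists'.mp hne1
    obtain ⟨v, hv, hNS⟩ := rows_vert N S E W hstep hstep0 _ _ hk u hu
    show N ((r (L - n + x - y) (p - n + x)).getD u0) =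
      S ((r (L - n + x - (y + 1)) (p - n + x)).getD u0)
    rw [show L - n + x - y = (L - n + x - (y + 1)) + 1 by omega, hu, hv]
    simpa using hNS
  · intro x y hx hy
    have hk : L - n + x - y < L := by omega
    have hne1 : r ((L - n + x - y) + 1) ((p - n + x) + 1) ≠ none :=
      hcone _ _ (by omega) (by omega) (by omega)
    obtain ⟨u, hu⟩ := Option.ne_none_iff_exists'.mp hne1
    obtain ⟨v, hv, hWE⟩ := rows_horiz N S E W hstep _ _ hk u hu
    show E ((r (L - n + x - y) (p - n + x)).getD u0) =
      W ((r (L - n + (x + 1) - y) (p - n + (x + 1))).getD u0)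
    rw [show L - n + (x + 1) - y = (L - n + x - y) + 1 by omega,
      show p - n + (x + 1) = (p - n + x) + 1 by omega, hu, hv]
    simpa using hWE.symm

end MainLemma

/-- if `{0, …, n}²` has no valid Wang tiling by the
NW-deterministic tile set `T` (which holds for some `n` whenever `ℤ²` has no
valid tiling), then the semigroup `⟨𝒜_T⟩` is finite, of cardinality at most
`1 + |A| + |A|² + ⋯ + |A|^{2n−1} + |Σ^n|^{|Σ^n|}`. -/
theorem stmt_11 {T C : Type*} [Fintype T] (N S E W : T → C)
    (hNW : NWDet N S E W) (n : ℕ)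
    (h : ¬∃ t : ℕ → ℕ → T, ValidSquare N S E W n t) :
    (tileM N S E W).genSet.Finite ∧
    (tileM N S E W).genSet.ncard ≤
      (∑ k ∈ Finset.range (2 * n), Fintype.card (Option T) ^ k) +
        (Fintype.card (Option T) ^ n) ^ (Fintype.card (Option T) ^ n) := by
  classical
  set M := tileM N S E W with hM
  set Lset : Set (List (Option T)) := {as | as.length < 2 * n} with hLset
  set S1 : Set ((ℕ → Option T) → ℕ → Option T) :=
    (fun as => M.outWInf as) '' Lset with hS1
  set g : ((Fin n → Option T) → (Fin n → Option T)) →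
      ((ℕ → Option T) → ℕ → Option T) :=
    fun F w p => if hp : p < n then F (fun i => w i) ⟨p, hp⟩ else none with hg
  set S2 : Set ((ℕ → Option T) → ℕ → Option T) := g '' Set.univ with hS2
  have hsub : M.genSet ⊆ S1 ∪ S2 := by
    rintro f ⟨as, -, rfl⟩
    by_cases hlen : as.length < 2 * n
    · exact Or.inl ⟨as, hlen, rfl⟩
    · refine Or.inr ⟨fun v i =>
        M.outWInf as (fun q => if hq : q < n then v ⟨q, hq⟩ else none) i,
        trivial, ?_⟩
      funext w p
      show (if hp : p < n then
        M.outWInf as (fun q => if hq : q < n then w q else none) p else none)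
        = M.outWInf as w p
      split
      · next hp =>
        exact outWInf_congr M as fun i hi => by
          simp [dif_pos (lt_of_le_of_lt hi hp)]
      · next hp =>
        exact (out_eventually_none N S E W n h as (by omega) w p (by omega)).symm
  have hLsub : Lset ⊆ Set.range
      (fun x : (Σ k : Fin (2 * n), Fin (k : ℕ) → Option T) => List.ofFn x.2) :=
    fun as has => ⟨⟨⟨as.length, has⟩, as.get⟩, List.ofFn_get as⟩
  have hLfin : Lset.Finite := (Set.finite_range _).subset hLsub
  have hS1fin : S1.Finite := hLfin.image _
  have hS2fin : S2.Finite := Set.finite_univ.image _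
  refine ⟨((hS1fin.union hS2fin)).subset hsub, ?_⟩
  have c1 : S1.ncard ≤ ∑ k ∈ Finset.range (2 * n), Fintype.card (Option T) ^ k := by
    calc S1.ncard ≤ Lset.ncard := Set.ncard_image_le hLfin
      _ ≤ (Set.range (fun x : (Σ k : Fin (2 * n), Fin (k : ℕ) → Option T) =>
            List.ofFn x.2)).ncard := Set.ncard_le_ncard hLsub (Set.finite_range _)
      _ ≤ (Set.univ : Set (Σ k : Fin (2 * n), Fin (k : ℕ) → Option T)).ncard := by
            rw [← Set.image_univ]
            exact Set.ncard_image_le Set.finite_univ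
      _ = Fintype.card (Σ k : Fin (2 * n), Fin (k : ℕ) → Option T) := by
            rw [Set.ncard_univ, Nat.card_eq_fintype_card]
      _ = ∑ k ∈ Finset.range (2 * n), Fintype.card (Option T) ^ k := by
            rw [Fintype.card_sigma]
            rw [← Fin.sum_univ_eq_sum_range (fun k => Fintype.card (Option T) ^ k)]
            exact Finset.sum_congr rfl fun k _ => by
              rw [Fintype.card_fun, Fintype.card_fin]
  have c2 : S2.ncard ≤
      (Fintype.card (Option T) ^ n) ^ (Fintype.card (Option T) ^ n) := by
    calc S2.ncard ≤ (Set.univ :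
          Set ((Fin n → Option T) → (Fin n → Option T))).ncard :=
            Set.ncard_image_le Set.finite_univ
      _ = Fintype.card ((Fin n → Option T) → (Fin n → Option T)) := by
            rw [Set.ncard_univ, Nat.card_eq_fintype_card]
      _ = (Fintype.card (Option T) ^ n) ^ (Fintype.card (Option T) ^ n) := by
            rw [Fintype.card_fun, Fintype.card_fun, Fintype.card_fin]
  calc M.genSet.ncard ≤ (S1 ∪ S2).ncard :=
        Set.ncard_le_ncard hsub (hS1fin.union hS2fin)
    _ ≤ S1.ncard + S2.ncard := Set.ncard_union_le S1 S2
    _ ≤ _ := Nat.add_le_add c1 c2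
end

section
/- Let 𝒜 = (A, Σ, δ, σ) be a Mealy automaton and n ∈ ℕ. Suppose that for every u ∈ A* with |u| ≥ 2n, every p ∈ Σ^n, and every q ∈ Σ^ω, one has σ_u(pq) = σ_u(p) ⊥^ω for a fixed letter ⊥ ∈ Σ. Then the semigroup ⟨𝒜⟩ generated by 𝒜 has cardinality at most (Σ_{k=0}^{2n−1} |A|^k) + |Σ^n|^{|Σ^n|}; in particular it is finite. -/
-- aux lemmas
lemma outA_length {A X : Type*} (M : Mealy A X) : ∀ (u : List X) (a : A),
    (M.outA a u).length = u.length := by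
  intro u
  induction u with
  | nil => intro a; rfl
  | cons x u ih => intro a; simp [Mealy.outA, ih]

lemma outW_length {A X : Type*} (M : Mealy A X) : ∀ (as : List A) (u : List X),
    (M.outW as u).length = u.length := by
  intro as
  induction as with
  | nil => intro u; rfl
  | cons a as ih =>
      intro u
      show (M.outW as (M.outA a u)).length = u.length
      rw [ih, outA_length]

lemma listApp_decomp {X : Type*} (n : ℕ) (w : ℕ → X) :
    listApp (List.ofFn fun i : Fin n => w i) (fun k => w (k + n)) = w := by
  funext m
  unfold listApp
  simp only [List.length_ofFn]
  split
  · simp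
  · congr 1
    omega

lemma long_eval {A X : Type*} (M : Mealy A X) (bot : X) (n : ℕ)
    (h : ∀ u : List A, 2 * n ≤ u.length → ∀ p : List X, p.length = n →
      ∀ q : ℕ → X, M.outWInf u (listApp p q) = listApp (M.outW u p) fun _ => bot)
    (u : List A) (hu : 2 * n ≤ u.length) (w : ℕ → X) :
    M.outWInf u w = listApp (M.outW u (List.ofFn fun i : Fin n => w i)) fun _ => bot := by
  have := h u hu (List.ofFn fun i : Fin n => w i) (by simp) (fun k => w (k + n))
  rwa [listApp_decomp] at this


/-- if in a Mealy automaton every state word `u` of length at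
least `2n` satisfies `σ_u(pq) = σ_u(p) ⊥^ω` for all `p ∈ Σ^n`, `q ∈ Σ^ω`
(for a fixed letter `⊥`), then the generated semigroup has cardinality at
most `(Σ_{k=0}^{2n−1} |A|^k) + |Σ^n|^{|Σ^n|}`; in particular it is finite. -/
theorem stmt_18 {A X : Type*} [Fintype A] [Fintype X] (M : Mealy A X)
    (bot : X) (n : ℕ)
    (h : ∀ u : List A, 2 * n ≤ u.length → ∀ p : List X, p.length = n →
      ∀ q : ℕ → X, M.outWInf u (listApp p q) = listApp (M.outW u p) fun _ => bot) :
    M.genSet.Finite ∧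
    M.genSet.ncard ≤
      (∑ k ∈ Finset.range (2 * n), Fintype.card A ^ k) +
        (Fintype.card X ^ n) ^ (Fintype.card X ^ n) := by
  classical
  set S1 : Set ((ℕ → X) → (ℕ → X)) :=
    M.outWInf '' {as : List A | as.length < 2 * n} with hS1
  set S2 : Set ((ℕ → X) → (ℕ → X)) :=
    {f | ∃ as : List A, 2 * n ≤ as.length ∧ f = M.outWInf as} with hS2
  -- the key evaluation for long words
  have key : ∀ f ∈ S2, ∀ w : ℕ → X,
      f w = fun k => if hk : k < n then
        (f (listApp (List.ofFn fun i : Fin n => w i) fun _ => bot)) k else bot := by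
    rintro f ⟨u, hu, rfl⟩ w
    funext k
    rw [long_eval M bot n h u hu w]
    by_cases hk : k < n
    · rw [dif_pos hk]
      rw [show M.outWInf u (listApp (List.ofFn fun i : Fin n => w i) fun _ => bot)
            = listApp (M.outW u (List.ofFn fun i : Fin n => w i)) fun _ => bot from
          h u hu _ (by simp) _]
    · rw [dif_neg hk]
      unfold listApp
      rw [dif_neg]
      rw [outW_length]
      simp only [List.length_ofFn]
      omega
  -- S2 injects into a finite function type
  have hΦ : ∀ f g : S2, (∀ p : Fin n → X, ∀ i : Fin n,
      f.1 (listApp (List.ofFn p) fun _ => bot) i = g.1 (listApp (List.ofFn p) fun _ => bot) i)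
      → f = g := by
    rintro ⟨f, hf⟩ ⟨g, hg⟩ hfg
    ext w k
    show f w k = g w k
    rw [key f hf w, key g hg w]
    dsimp only
    by_cases hk : k < n
    · rw [dif_pos hk, dif_pos hk]
      exact hfg (fun i => w i) ⟨k, hk⟩
    · rw [dif_neg hk, dif_neg hk]
  have hS2inj : Function.Injective
      (fun f : S2 => fun p : Fin n → X => fun i : Fin n =>
        f.1 (listApp (List.ofFn p) fun _ => bot) i) := by
    intro f g hfg
    exact hΦ f g (fun p i => congrFun (congrFun hfg p) i)
  have hS2fin : S2.Finite := by
    rw [← Set.finite_coe_iff]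
    exact Finite.of_injective _ hS2inj
  have hS2card : S2.ncard ≤ (Fintype.card X ^ n) ^ (Fintype.card X ^ n) := by
    have := Nat.card_le_card_of_injective _ hS2inj
    rw [Set.ncard]
    calc Nat.card S2 ≤ Nat.card ((Fin n → X) → Fin n → X) := this
      _ = (Fintype.card X ^ n) ^ (Fintype.card X ^ n) := by
          simp [Nat.card_eq_fintype_card]
  -- S1 finiteness and cardinality
  have hTfin : {as : List A | as.length < 2 * n}.Finite := List.finite_length_lt A (2 * n)
  have hS1fin : S1.Finite := hTfin.image _
  have hTcard : {as : List A | as.length < 2 * n}.ncard ≤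
      ∑ k ∈ Finset.range (2 * n), Fintype.card A ^ k := by
    have hinj : Function.Injective
        (fun as : {as : List A | as.length < 2 * n} =>
          (⟨⟨as.1.length, as.2⟩, fun i : Fin as.1.length => as.1.get i⟩ :
            Σ k : Fin (2 * n), (Fin k → A))) := by
      rintro ⟨as, has⟩ ⟨bs, hbs⟩ hab
      simp only [Sigma.mk.inj_iff, Fin.mk.injEq] at hab
      obtain ⟨hlen, hget⟩ := hab
      rw [Fin.heq_fun_iff hlen] at hget
      ext1
      apply List.ext_get hlen
      intro i h1 h2
      simpa using hget ⟨i, h1⟩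
    have := Nat.card_le_card_of_injective _ hinj
    rw [Set.ncard]
    calc Nat.card {as : List A | as.length < 2 * n}
        ≤ Nat.card (Σ k : Fin (2 * n), (Fin k → A)) := this
      _ = ∑ k ∈ Finset.range (2 * n), Fintype.card A ^ k := by
          rw [Nat.card_eq_fintype_card, Fintype.card_sigma]
          rw [← Fin.sum_univ_eq_sum_range (fun k => Fintype.card A ^ k)]
          simp
  have hS1card : S1.ncard ≤ ∑ k ∈ Finset.range (2 * n), Fintype.card A ^ k :=
    le_trans (Set.ncard_image_le hTfin) hTcard
  -- genSet ⊆ S1 ∪ S2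
  have hsub : M.genSet ⊆ S1 ∪ S2 := by
    rintro f ⟨as, hne, rfl⟩
    by_cases hlen : as.length < 2 * n
    · exact Or.inl ⟨as, hlen, rfl⟩
    · exact Or.inr ⟨as, by omega, rfl⟩
  have hfin : M.genSet.Finite := (hS1fin.union hS2fin).subset hsub
  refine ⟨hfin, ?_⟩
  calc M.genSet.ncard ≤ (S1 ∪ S2).ncard :=
        Set.ncard_le_ncard hsub (hS1fin.union hS2fin)
    _ ≤ S1.ncard + S2.ncard := Set.ncard_union_le S1 S2
    _ ≤ _ := Nat.add_le_add hS1card hS2card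
end

section
/- For the Mealy automaton 𝒜_T of a finite NW-deterministic tile set, if a state word u of length at least 2n satisfies σ_v(pq) = σ_v(p)⊥^ω for its prefix v of length 2n (for all p ∈ Σ^n, q ∈ Σ^ω), then σ_u(pq) = σ_u(p)⊥^ω for all p ∈ Σ^n, q ∈ Σ^ω. -/
section Aux

variable {A X : Type*} (M : Mealy A X)

lemma outA_length_s19 (a : A) (p : List X) : (M.outA a p).length = p.length := by
  induction p generalizing a with
  | nil => rfl
  | cons x u ih => simp [Mealy.outA, ih]

lemma outA_get (a : A) (p : List X) (m : ℕ) (h : m < p.length) :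
    (M.outA a p)[m]'(by rw [outA_length_s19]; exact h) =
      M.σ (M.stA a (p.take m)) (p[m]'h) := by
  induction p generalizing a m with
  | nil => simp at h
  | cons x u ih =>
    cases m with
    | zero => simp [Mealy.outA, Mealy.stA]
    | succ m => simpa [Mealy.outA, Mealy.stA] using ih (M.δ a x) m (by simpa using h)

lemma ofFn_listApp (p : List X) (q : ℕ → X) (m : ℕ) (h : m ≤ p.length) :
    (List.ofFn fun i : Fin m => listApp p q i) = p.take m := by
  apply List.ext_get
  · simp [h]
  · intro i h1 h2
    have hi : i < m := by simpa using h1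
    have hip : i < p.length := lt_of_lt_of_le hi h
    simp [listApp, hip, List.getElem_take']

variable (bot : X) (hbot : ∀ a : A, M.σ a bot = bot)

include hbot in
lemma outInf_listApp (a : A) (p : List X) :
    M.outInf a (listApp p fun _ => bot) = listApp (M.outA a p) fun _ => bot := by
  funext m
  by_cases h : m < p.length
  · have h' : m < (M.outA a p).length := by rw [outA_length_s19]; exact h
    simp only [Mealy.outInf]
    rw [ofFn_listApp p _ m h.le]
    simp only [listApp, h, h', dif_pos]
    simp only [List.get_eq_getElem, Fin.getElem_fin]
    exact (outA_get M a p m h).symm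
  · have h' : ¬ m < (M.outA a p).length := by rw [outA_length_s19]; exact h
    simp only [Mealy.outInf, listApp, h', dif_neg, h, dite_false]
    exact hbot _

include hbot in
lemma outWInf_listApp (as : List A) (p : List X) :
    M.outWInf as (listApp p fun _ => bot) = listApp (M.outW as p) fun _ => bot := by
  induction as generalizing p with
  | nil => rfl
  | cons a as ih =>
    show M.outWInf as (M.outInf a (listApp p fun _ => bot)) =
      listApp (M.outW as (M.outA a p)) fun _ => bot
    rw [outInf_listApp M bot hbot, ih]

lemma outWInf_append (as bs : List A) (w : ℕ → X) :
    M.outWInf (as ++ bs) w = M.outWInf bs (M.outWInf as w) :=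
  List.foldl_append ..

lemma outW_append (as bs : List A) (p : List X) :
    M.outW (as ++ bs) p = M.outW bs (M.outW as p) :=
  List.foldl_append ..

end Aux

/-- in `𝒜_T`, if a state word `u` of length at least `2n` is
such that its prefix `v` of length `2n` satisfies `σ_v(pq) = σ_v(p)⊥^ω` for
all `p ∈ Σ^n`, `q ∈ Σ^ω`, then `σ_u(pq) = σ_u(p)⊥^ω` as well. -/
theorem stmt_19 {T C : Type*} [Fintype T] (N S E W : T → C)
    (hNW : NWDet N S E W) (n : ℕ) (u : List (Option T)) (hu : 2 * n ≤ u.length)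
    (hv : ∀ p : List (Option T), p.length = n → ∀ q : ℕ → Option T,
      (tileM N S E W).outWInf (u.take (2 * n)) (listApp p q) =
        listApp ((tileM N S E W).outW (u.take (2 * n)) p) fun _ => none) :
    ∀ p : List (Option T), p.length = n → ∀ q : ℕ → Option T,
      (tileM N S E W).outWInf u (listApp p q) =
        listApp ((tileM N S E W).outW u p) fun _ => none := by
  intro p hp q
  set M := tileM N S E W
  have hbot : ∀ a : Option T, M.σ a none = none := by
    intro a; cases a <;> rfl
  have hsplit : u.take (2 * n) ++ u.drop (2 * n) = u := List.take_append_drop _ _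
  calc M.outWInf u (listApp p q)
      = M.outWInf (u.drop (2 * n)) (M.outWInf (u.take (2 * n)) (listApp p q)) := by
        rw [← hsplit, outWInf_append]; simp [hsplit]
    _ = M.outWInf (u.drop (2 * n))
          (listApp (M.outW (u.take (2 * n)) p) fun _ => none) := by rw [hv p hp q]
    _ = listApp (M.outW (u.drop (2 * n)) (M.outW (u.take (2 * n)) p)) fun _ => none :=
        outWInf_listApp M none hbot _ _
    _ = listApp (M.outW u p) fun _ => none := by rw [← outW_append, hsplit]
end
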